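/- Let d ≥ 1, let Q be an invertible real d×d matrix, let M satisfy the commutation condition Mᵀ(QᵀQ)⁻¹ = (QᵀQ)⁻¹M, and let v, w be symmetric real d×d matrices. Let R be a symmetric positive definite matrix with R·R = v̄, assume R + w̄ is invertible, and assume R·cosh(Rτ) + w̄·sinh(Rτ) is invertible for every τ ≥ 0. Then the function ψ(τ) := (QᵀQ)⁻¹M/2 − Q⁻¹·R·k(τ)·(Qᵀ)⁻¹/2 converges, as τ → ∞, to Q⁻¹·R·(Qᵀ)⁻¹/2 + (QᵀQ)⁻¹M/2. -/

import Mathlib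

open Matrix NormedSpace

attribute [local instance] Matrix.linftyOpNormedRing Matrix.linftyOpNormedAlgebra

/-- `cosh` of a square matrix. -/
noncomputable def mcosh {d : ℕ} (X : Matrix (Fin d) (Fin d) ℝ) : Matrix (Fin d) (Fin d) ℝ :=
  (2:ℝ)⁻¹ • (exp X + exp (-X))

/-- `sinh` of a square matrix. -/
noncomputable def msinh {d : ℕ} (X : Matrix (Fin d) (Fin d) ℝ) : Matrix (Fin d) (Fin d) ℝ :=
  (2:ℝ)⁻¹ • (exp X - exp (-X))

theorem aux_exp_tendsto (d : ℕ) (R : Matrix (Fin d) (Fin d) ℝ) (hRpos : R.PosDef) :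
    Filter.Tendsto (fun τ : ℝ => exp (-(τ • R))) Filter.atTop (nhds 0) := by
  have hHerm : R.IsHermitian := hRpos.1
  set U : Matrix (Fin d) (Fin d) ℝ := (Matrix.IsHermitian.eigenvectorUnitary hHerm : Matrix (Fin d) (Fin d) ℝ) with hUdef
  set lam : Fin d → ℝ := hHerm.eigenvalues with hlamdef
  have hUmul : U * star U = 1 := by
    exact (Matrix.mem_unitaryGroup_iff).mp (Matrix.IsHermitian.eigenvectorUnitary hHerm).2
  have hUmul' : star U * U = 1 := by
    exact (Matrix.mem_unitaryGroup_iff').mp (Matrix.IsHermitian.eigenvectorUnitary hHerm).2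
  have hUunit : IsUnit U := ⟨⟨U, star U, hUmul, hUmul'⟩, rfl⟩
  have hUinv : U⁻¹ = star U := Matrix.inv_eq_right_inv hUmul
  have hspec : R = U * Matrix.diagonal lam * U⁻¹ := by
    rw [hUinv]
    simpa [RCLike.ofReal_real_eq_id] using hHerm.spectral_theorem
  have hF : ∀ τ : ℝ, exp (-(τ • R))
      = U * Matrix.diagonal (fun i => Real.exp (-(τ * lam i))) * U⁻¹ := by
    intro τ
    have hdiag : Matrix.diagonal (fun i => -(τ * lam i)) = -(τ • Matrix.diagonal lam) := by
      rw [← Matrix.diagonal_smul, ← Matrix.diagonal_neg]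
      congr 1
    have h1 : -(τ • R) = U * Matrix.diagonal (fun i => -(τ * lam i)) * U⁻¹ := by
      conv_lhs => rw [hspec]
      rw [hdiag]
      simp [Matrix.mul_smul, Matrix.smul_mul, mul_neg, neg_mul]
    have hexp : exp (fun i => -(τ * lam i)) = fun i => Real.exp (-(τ * lam i)) := by
      funext i
      rw [Pi.coe_exp]
      exact congrFun Real.exp_eq_exp_ℝ.symm _
    rw [h1, Matrix.exp_conj _ _ hUunit, Matrix.exp_diagonal, hexp]
  have hD : Filter.Tendsto (fun τ : ℝ => (fun i => Real.exp (-(τ * lam i))))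
      Filter.atTop (nhds 0) := by
    rw [tendsto_pi_nhds]
    intro i
    have hpos : 0 < lam i := hRpos.eigenvalues_pos i
    have h1 : Filter.Tendsto (fun τ : ℝ => τ * lam i) Filter.atTop Filter.atTop :=
      Filter.Tendsto.atTop_mul_const hpos Filter.tendsto_id
    have h2 : Filter.Tendsto (fun τ : ℝ => -(τ * lam i)) Filter.atTop Filter.atBot :=
      Filter.tendsto_neg_atTop_atBot.comp h1
    have h4 := Real.tendsto_exp_atBot.comp h2
    simpa [Function.comp_def] using h4
  have hcont : Continuous (fun D : Fin d → ℝ => U * Matrix.diagonal D * U⁻¹) :=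
    (continuous_const.matrix_mul continuous_id.matrix_diagonal).matrix_mul continuous_const
  have h3 := (hcont.tendsto 0).comp hD
  have h5 : U * Matrix.diagonal (0 : Fin d → ℝ) * U⁻¹ = 0 := by
    have hz : Matrix.diagonal (0 : Fin d → ℝ) = 0 := Matrix.diagonal_zero
    rw [hz, Matrix.mul_zero, Matrix.zero_mul]
  rw [show (fun τ : ℝ => exp (-(τ • R))) = (fun τ : ℝ => U * Matrix.diagonal (fun i => Real.exp (-(τ * lam i))) * U⁻¹) from funext hF]
  rw [h5] at h3
  exact h3

theorem stmt_10 (d : ℕ) (hd : 1 ≤ d)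
    (Q M v w R : Matrix (Fin d) (Fin d) ℝ)
    (hQ : IsUnit Q)
    (hM : Mᵀ * (Qᵀ * Q)⁻¹ = (Qᵀ * Q)⁻¹ * M)
    (hv : v.IsSymm) (hw : w.IsSymm)
    (hRsymm : R.IsSymm) (hRpos : R.PosDef)
    (vbar wbar : Matrix (Fin d) (Fin d) ℝ)
    (hvbar : vbar = Q * ((2:ℝ) • v + Mᵀ * (Qᵀ * Q)⁻¹ * M) * Qᵀ)
    (hwbar : wbar = Q * ((2:ℝ) • w - (Qᵀ * Q)⁻¹ * M) * Qᵀ)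
    (hRR : R * R = vbar)
    (hRw : IsUnit (R + wbar))
    (hinv : ∀ τ : ℝ, 0 ≤ τ → IsUnit (R * mcosh (τ • R) + wbar * msinh (τ • R)))
    (k ψ : ℝ → Matrix (Fin d) (Fin d) ℝ)
    (hk : ∀ τ, k τ = -((R * mcosh (τ • R) + wbar * msinh (τ • R))⁻¹ *
      (R * msinh (τ • R) + wbar * mcosh (τ • R))))
    (hψ : ∀ τ, ψ τ = (2:ℝ)⁻¹ • ((Qᵀ * Q)⁻¹ * M) - (2:ℝ)⁻¹ • (Q⁻¹ * R * k τ * Qᵀ⁻¹)) :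
    Filter.Tendsto ψ Filter.atTop
      (nhds ((2:ℝ)⁻¹ • (Q⁻¹ * R * Qᵀ⁻¹) + (2:ℝ)⁻¹ • ((Qᵀ * Q)⁻¹ * M))) := by
  have hFt := aux_exp_tendsto d R hRpos
  set E : ℝ → Matrix (Fin d) (Fin d) ℝ := fun τ => exp (τ • R) with hEdef
  set F : ℝ → Matrix (Fin d) (Fin d) ℝ := fun τ => exp (-(τ • R)) with hFdef
  have hEF : ∀ τ, E τ * F τ = 1 := by
    intro τ
    rw [hEdef, hFdef]
    simp only
    rw [← Matrix.exp_add_of_commute (τ • R) (-(τ • R)) ((Commute.refl (τ • R)).neg_right)]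
    simp [NormedSpace.exp_zero]
  set K : Matrix (Fin d) (Fin d) ℝ := (R + wbar)⁻¹ * (R - wbar) with hKdef
  set G : ℝ → Matrix (Fin d) (Fin d) ℝ := fun τ => F τ * K * F τ with hGdef
  have hG0 : Filter.Tendsto G Filter.atTop (nhds 0) := by
    have := (hFt.mul (tendsto_const_nhds (x := K))).mul hFt
    simpa using this
  have h1G : Filter.Tendsto (fun τ => (1 : Matrix (Fin d) (Fin d) ℝ) + G τ)
      Filter.atTop (nhds 1) := by
    simpa using (tendsto_const_nhds (x := (1 : Matrix (Fin d) (Fin d) ℝ))).add hG0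
  have hRwdet : IsUnit (R + wbar).det := (Matrix.isUnit_iff_isUnit_det _).mp hRw
  have hkEq : ∀ τ : ℝ, 0 ≤ τ → k τ = -((1 + G τ)⁻¹ * (1 - G τ)) := by
    intro τ hτ
    have hCeq : R * mcosh (τ • R) + wbar * msinh (τ • R)
        = (2:ℝ)⁻¹ • ((R + wbar) * E τ + (R - wbar) * F τ) := by
      simp only [mcosh, msinh, Matrix.mul_smul, ← smul_add]
      congr 1
      noncomm_ring
    have hSeq : R * msinh (τ • R) + wbar * mcosh (τ • R)
        = (2:ℝ)⁻¹ • ((R + wbar) * E τ - (R - wbar) * F τ) := by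
      simp only [mcosh, msinh, Matrix.mul_smul, ← smul_add]
      congr 1
      noncomm_ring
    have h2 : (R + wbar) * E τ * G τ = (R - wbar) * F τ := by
      have h3 : E τ * (F τ * K * F τ) = K * F τ := by
        rw [show F τ * K * F τ = F τ * (K * F τ) from by rw [mul_assoc],
          ← mul_assoc, hEF τ, one_mul]
      have h4 : (R + wbar) * K = R - wbar := by
        rw [hKdef, ← mul_assoc, Matrix.mul_nonsing_inv _ hRwdet, one_mul]
      rw [hGdef]
      simp only
      rw [mul_assoc (R + wbar) (E τ) _, h3, ← mul_assoc, h4]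
    have hAU : (R + wbar) * E τ * (1 + G τ) = (R + wbar) * E τ + (R - wbar) * F τ := by
      rw [mul_add, mul_one, h2]
    have hAUm : (R + wbar) * E τ * (1 - G τ) = (R + wbar) * E τ - (R - wbar) * F τ := by
      rw [mul_sub, mul_one, h2]
    have hCunit := hinv τ hτ
    have hC2 : (2:ℝ) • (R * mcosh (τ • R) + wbar * msinh (τ • R))
        = (R + wbar) * E τ * (1 + G τ) := by
      rw [hCeq, hAU, smul_smul]
      norm_num
    have hprod_unit : IsUnit ((R + wbar) * E τ * (1 + G τ)) := by
      rw [← hC2, Matrix.isUnit_iff_isUnit_det, Matrix.det_smul]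
      exact (isUnit_iff_ne_zero.mpr (by positivity)).mul
        ((Matrix.isUnit_iff_isUnit_det _).mp hCunit)
    have hGunit : IsUnit ((1 : Matrix (Fin d) (Fin d) ℝ) + G τ) := by
      rw [Matrix.isUnit_iff_isUnit_det]
      have h5 := (Matrix.isUnit_iff_isUnit_det _).mp hprod_unit
      rw [Matrix.det_mul] at h5
      exact isUnit_of_mul_isUnit_right h5
    have hg1 : (1 + G τ) * (1 + G τ)⁻¹ = 1 :=
      Matrix.mul_nonsing_inv _ ((Matrix.isUnit_iff_isUnit_det _).mp hGunit)
    have hmid : (R + wbar) * E τ * (1 + G τ) * ((1 + G τ)⁻¹ * (1 - G τ))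
        = (R + wbar) * E τ * (1 - G τ) := by
      calc (R + wbar) * E τ * (1 + G τ) * ((1 + G τ)⁻¹ * (1 - G τ))
          = (R + wbar) * E τ * ((1 + G τ) * ((1 + G τ)⁻¹ * (1 - G τ))) := by
            rw [mul_assoc]
        _ = (R + wbar) * E τ * ((1 + G τ) * (1 + G τ)⁻¹ * (1 - G τ)) := by
            rw [mul_assoc ((1 + G τ))]
        _ = (R + wbar) * E τ * (1 - G τ) := by rw [hg1, one_mul]
    have hCX : (R * mcosh (τ • R) + wbar * msinh (τ • R)) * ((1 + G τ)⁻¹ * (1 - G τ))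
        = R * msinh (τ • R) + wbar * mcosh (τ • R) := by
      rw [hCeq, ← hAU, Matrix.smul_mul, hmid, hAUm, hSeq]
    have hCdet := (Matrix.isUnit_iff_isUnit_det _).mp hCunit
    rw [hk τ]
    congr 1
    calc (R * mcosh (τ • R) + wbar * msinh (τ • R))⁻¹ *
          (R * msinh (τ • R) + wbar * mcosh (τ • R))
        = (R * mcosh (τ • R) + wbar * msinh (τ • R))⁻¹ *
          ((R * mcosh (τ • R) + wbar * msinh (τ • R)) * ((1 + G τ)⁻¹ * (1 - G τ))) := by
          rw [hCX]
      _ = (1 + G τ)⁻¹ * (1 - G τ) := by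
          rw [← mul_assoc, Matrix.nonsing_inv_mul _ hCdet, one_mul]
  -- continuity of inverse at 1
  have hinv1 : Filter.Tendsto (fun τ => ((1 : Matrix (Fin d) (Fin d) ℝ) + G τ)⁻¹)
      Filter.atTop (nhds 1) := by
    have hci : ContinuousAt (Ring.inverse : ℝ → ℝ) (Matrix.det (1 : Matrix (Fin d) (Fin d) ℝ)) := by
      rw [Ring.inverse_eq_inv', Matrix.det_one]
      exact continuousAt_inv₀ one_ne_zero
    have hc : ContinuousAt Inv.inv (1 : Matrix (Fin d) (Fin d) ℝ) :=
      continuousAt_matrix_inv _ hci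
    have := hc.tendsto.comp h1G
    simpa [Function.comp_def] using this
  have hsub : Filter.Tendsto (fun τ => (1 : Matrix (Fin d) (Fin d) ℝ) - G τ)
      Filter.atTop (nhds 1) := by
    simpa using (tendsto_const_nhds (x := (1 : Matrix (Fin d) (Fin d) ℝ))).sub hG0
  have hkt : Filter.Tendsto k Filter.atTop (nhds (-1)) := by
    have hlim : Filter.Tendsto (fun τ => -((1 + G τ)⁻¹ * (1 - G τ)))
        Filter.atTop (nhds (-1)) := by
      have := (hinv1.mul hsub).neg
      simpa using this
    refine hlim.congr' ?_
    filter_upwards [Filter.eventually_ge_atTop (0:ℝ)] with τ hτ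
    exact (hkEq τ hτ).symm
  have hmain : Filter.Tendsto (fun τ => Q⁻¹ * R * k τ * Qᵀ⁻¹) Filter.atTop
      (nhds (Q⁻¹ * R * (-1) * Qᵀ⁻¹)) :=
    ((tendsto_const_nhds (x := Q⁻¹ * R)).mul hkt).mul tendsto_const_nhds
  have hfinal := (tendsto_const_nhds (x := (2:ℝ)⁻¹ • ((Qᵀ * Q)⁻¹ * M))).sub
    (hmain.const_smul ((2:ℝ)⁻¹))
  refine Filter.Tendsto.congr (fun τ => (hψ τ).symm) ?_
  convert hfinal using 2
  rw [mul_neg, mul_one, neg_mul, smul_neg, sub_neg_eq_add, add_comm]
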